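/- For every positive integer t, let B be the balanced blowup of the 9-cycle with parts of size t: the vertex set is {0,…,8} × {1,…,t}, and (i,a) is adjacent to (j,b) if and only if j ≡ i+1 (mod 9) or j ≡ i−1 (mod 9); color each vertex (i,a) with the color i mod 3 ∈ {0,1,2}. Let D be the 6-cycle on vertices 0,…,5 (with k adjacent to k±1 mod 6), colored by assigning vertex k the color k mod 3. Then: (i) the coloring of B is a proper 3-coloring, B has exactly 9t² edges, and (ii) B contains no colored copy of the colored 6-cycle D, i.e., there is no injective graph homomorphism φ from the 6-cycle to B mapping each vertex k to a vertex of color k mod 3. -/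

import Mathlib

open SimpleGraph

/-- The balanced blowup of the 9-cycle with parts of size `t`: vertices are pairs
`(i, a)` with `i : ZMod 9` and `a : Fin t`, and `(i, a)` is adjacent to `(j, b)` iff
`j ≡ i + 1` or `j ≡ i - 1` (mod 9). -/
def blowupC9 (t : ℕ) : SimpleGraph (ZMod 9 × Fin t) where
  Adj p q := q.1 = p.1 + 1 ∨ q.1 = p.1 - 1
  symm := by
    constructor
    rintro ⟨i, a⟩ ⟨j, b⟩ h
    have h' : j = i + 1 ∨ j = i - 1 := h
    clear h
    show i = j + 1 ∨ i = j - 1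
    revert h'; revert i j; decide
  loopless := by
    constructor
    rintro ⟨i, a⟩ h
    have h' : i = i + 1 ∨ i = i - 1 := h
    clear h
    revert h'; revert i; decide

instance (t : ℕ) : DecidableRel (blowupC9 t).Adj := fun p q =>
  inferInstanceAs (Decidable (q.1 = p.1 + 1 ∨ q.1 = p.1 - 1))

/-- The coloring of the blowup: vertex `(i, a)` gets color `i mod 3`. -/
def blowupColoring (t : ℕ) (p : ZMod 9 × Fin t) : Fin 3 :=
  ⟨p.1.val % 3, Nat.mod_lt _ (by norm_num)⟩

/-- The coloring of the 6-cycle: vertex `k` gets color `k mod 3`. -/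
def c6Coloring (k : Fin 6) : Fin 3 := ⟨k.val % 3, Nat.mod_lt _ (by norm_num)⟩

lemma aux_step (k : Fin 6) (i j : ZMod 9) (h : j = i + 1 ∨ j = i - 1)
    (hi : i.val % 3 = k.val % 3) (hj : j.val % 3 = (k + 1).val % 3) : j = i + 1 := by
  revert h hi hj; revert k i j; decide

lemma aux_deg (p : ZMod 9) : p + 1 ≠ p - 1 := by revert p; decide

/-- The coloring of the `C₉`-blowup is a proper 3-coloring, the blowup has exactly
`9 t²` edges, and it contains no colored copy of the colored 6-cycle (where vertex `k`
of the 6-cycle has color `k mod 3`). -/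
theorem blowupC9_colored_C6_free (t : ℕ) (ht : 0 < t) :
    (∀ p q, (blowupC9 t).Adj p q → blowupColoring t p ≠ blowupColoring t q) ∧
    (blowupC9 t).edgeFinset.card = 9 * t ^ 2 ∧
    ¬ ∃ φ : SimpleGraph.cycleGraph 6 →g blowupC9 t,
        Function.Injective φ ∧ ∀ k : Fin 6, blowupColoring t (φ k) = c6Coloring k := by
  refine ⟨?_, ?_, ?_⟩
  · rintro ⟨i, a⟩ ⟨j, b⟩ (h : j = i + 1 ∨ j = i - 1)
    simp only [blowupColoring, ne_eq, Fin.mk.injEq]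
    revert h; revert i j; decide
  · have hdeg : ∀ p : ZMod 9 × Fin t, (blowupC9 t).degree p = 2 * t := by
      intro p
      have : (blowupC9 t).neighborFinset p =
          ({p.1 + 1, p.1 - 1} : Finset (ZMod 9)) ×ˢ Finset.univ := by
        ext q
        rw [mem_neighborFinset]
        simp [blowupC9, Finset.mem_product]
      rw [SimpleGraph.degree, this, Finset.card_product,
        Finset.card_pair (aux_deg p.1)]
      simp [mul_comm]
    have hsum := SimpleGraph.sum_degrees_eq_twice_card_edges (blowupC9 t)
    simp only [hdeg, Finset.sum_const, Finset.card_univ, smul_eq_mul] at hsum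
    have hcard : Fintype.card (ZMod 9 × Fin t) = 9 * t := by
      simp [Fintype.card_prod]
    rw [hcard] at hsum
    nlinarith [hsum]
  · rintro ⟨φ, hinj, hc⟩
    have key : ∀ k : Fin 6, (φ (k + 1)).1 = (φ k).1 + 1 := by
      intro k
      have hadj : (blowupC9 t).Adj (φ k) (φ (k + 1)) := by
        apply φ.map_adj
        rw [cycleGraph_adj']
        right; simp
      refine aux_step k _ _ hadj ?_ ?_
      · have := hc k; simpa [blowupColoring, c6Coloring, Fin.ext_iff] using this
      · have := hc (k + 1); simpa [blowupColoring, c6Coloring, Fin.ext_iff] using this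
    have h0 : (φ 0).1 = (φ 0).1 + 6 := by
      have h1 : (φ 1).1 = (φ 0).1 + 1 := key 0
      have h2 : (φ 2).1 = (φ 1).1 + 1 := key 1
      have h3 : (φ 3).1 = (φ 2).1 + 1 := key 2
      have h4 : (φ 4).1 = (φ 3).1 + 1 := key 3
      have h5 : (φ 5).1 = (φ 4).1 + 1 := key 4
      have h6 : (φ 0).1 = (φ 5).1 + 1 := key 5
      linear_combination h1 + h2 + h3 + h4 + h5 + h6
    have : (6 : ZMod 9) ≠ 0 := by decide
    have := left_eq_add.mp h0
    exact (by decide : (6 : ZMod 9) ≠ 0) this
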